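/- arXiv:2105.07084 — 2 statements merged into one kernel-verified Lean document; each statement's English description precedes it below -/
import Mathlib

section
/- Let n ≥ 1 be a natural number and let σ₂ be a holomorphic function on a neighborhood of 0 ∈ ℂ with σ₂(0) ≠ 0. Then there exists a holomorphic function h on a (possibly smaller) neighborhood of 0 with h(0) ≠ 0 such that z^n · log h(z) + 1/h(z)^n + σ₂(z) = 0 for all z ≠ 0 near 0, where log is a branch of logarithm defined near h(0). Consequently w(z) := z·h(z) is an invertible holomorphic germ at 0 satisfying log(w(z)) + 1/w(z)^n = log z - σ₂(z)/z^n. -/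
open Complex ContinuousLinearMap

/-- normalization of the parabolic developing map `log z + σ₂(z)/z^n`.
There is a holomorphic `h` near `0` with `h 0 ≠ 0` and a branch `L` of logarithm near `h 0`
with `z^n · L(h z) + 1/(h z)^n + σ₂ z = 0` for `z ≠ 0` near `0`; consequently
`w(z) = z·h(z)` is an invertible germ with
`log (w z) + 1/(w z)^n = log z - σ₂ z / z^n` (the branch of `log (w z)` being
`log z + L (h z)`). -/
theorem stmt1 (n : ℕ) (hn : 1 ≤ n) (σ₂ : ℂ → ℂ)
    (hσ : AnalyticAt ℂ σ₂ 0) (hσ0 : σ₂ 0 ≠ 0) :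
    ∃ h L : ℂ → ℂ, AnalyticAt ℂ h 0 ∧ h 0 ≠ 0 ∧ AnalyticAt ℂ L (h 0) ∧
      (∀ᶠ w in nhds (h 0), Complex.exp (L w) = w) ∧
      (∀ᶠ z in nhds (0 : ℂ), z ≠ 0 → z ^ n * L (h z) + 1 / (h z) ^ n + σ₂ z = 0) ∧
      deriv (fun z => z * h z) 0 ≠ 0 ∧
      (∀ᶠ z in nhds (0 : ℂ), z ≠ 0 →
        (Complex.log z + L (h z)) + 1 / (z * h z) ^ n
          = Complex.log z - σ₂ z / z ^ n) := by
  have hn0 : (n : ℂ) ≠ 0 := Nat.cast_ne_zero.mpr (by omega)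
  -- choose c with c ^ n = -(σ₂ 0)⁻¹, i.e. 1/c^n + σ₂ 0 = 0
  set c : ℂ := Complex.exp (Complex.log (-(σ₂ 0)⁻¹) / n) with hc_def
  have hc : c ≠ 0 := Complex.exp_ne_zero _
  have hcn : c ^ n = -(σ₂ 0)⁻¹ := by
    rw [hc_def, ← Complex.exp_nat_mul, mul_div_cancel₀ _ hn0,
      Complex.exp_log (by simpa using hσ0)]
  have hkey : 1 / c ^ n + σ₂ 0 = 0 := by
    rw [hcn]; field_simp; ring
  -- the branch of log
  set L : ℂ → ℂ := fun w => Complex.log (w / c) + Complex.log c with hL_def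
  have hLan : AnalyticAt ℂ L c := by
    apply AnalyticAt.add _ analyticAt_const
    have : AnalyticAt ℂ (fun w : ℂ => w / c) c := analyticAt_id.div analyticAt_const hc
    exact (analyticAt_clog (by simp [div_self hc, Complex.one_mem_slitPlane])).comp this
  have hLexp : ∀ᶠ w in nhds c, Complex.exp (L w) = w := by
    have hopen : ∀ᶠ w in nhds c, w / c ∈ Complex.slitPlane := by
      apply (Complex.isOpen_slitPlane.preimage (by continuity)).mem_nhds
      simp [div_self hc, Complex.one_mem_slitPlane]
    filter_upwards [hopen] with w hw
    rw [hL_def, Complex.exp_add, Complex.exp_log (Complex.slitPlane_ne_zero hw),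
      Complex.exp_log hc, div_mul_cancel₀ _ hc]
  -- derivative data
  set dL : ℂ := deriv L c with hdL_def
  have hd3 : HasDerivAt (fun ζ : ℂ => 1 / ζ ^ n) (-(↑n * c ^ (n - 1)) / (c ^ n) ^ 2) c := by
    simpa [one_div] using (hasDerivAt_pow n c).fun_inv (pow_ne_zero n hc)
  set d3 : ℂ := -(↑n * c ^ (n - 1)) / (c ^ n) ^ 2 with hd3_def
  have hd3ne : d3 ≠ 0 := by
    rw [hd3_def]
    apply div_ne_zero
    · simpa [hn0, hc] using pow_ne_zero (n - 1) hc
    · exact pow_ne_zero 2 (pow_ne_zero n hc)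
  set A : ℂ := deriv σ₂ 0 + L c * (↑n * (0:ℂ) ^ (n - 1)) with hA_def
  set B : ℂ := d3 with hB_def
  have hBne : B ≠ 0 := hd3ne
  -- the two-variable map
  set Φ : ℂ × ℂ → ℂ × ℂ :=
    fun p => (p.1, p.1 ^ n * L p.2 + 1 / p.2 ^ n + σ₂ p.1) with hΦ_def
  have hzp : (0:ℂ) ^ n = 0 := zero_pow (by omega)
  have hΦ0 : Φ (0, c) = (0, 0) := by
    simp only [hΦ_def, hzp]
    simpa using hkey
  have hΦan : AnalyticAt ℂ Φ (0, c) := by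
    apply AnalyticAt.prod analyticAt_fst
    apply AnalyticAt.add
    apply AnalyticAt.add
    · apply (analyticAt_fst.pow n).mul
      have := AnalyticAt.comp (g := L) (f := fun p : ℂ × ℂ => p.2) (x := ((0:ℂ), c))
        hLan analyticAt_snd
      exact this
    · exact analyticAt_const.div (analyticAt_snd.pow n) (pow_ne_zero n hc)
    · have := AnalyticAt.comp (g := σ₂) (f := fun p : ℂ × ℂ => p.1) (x := ((0:ℂ), c))
        hσ analyticAt_fst
      exact this
  -- the derivative of Φ at (0, c)
  set fstL : ℂ × ℂ →L[ℂ] ℂ := ContinuousLinearMap.fst ℂ ℂ ℂ with hfst_def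
  set sndL : ℂ × ℂ →L[ℂ] ℂ := ContinuousLinearMap.snd ℂ ℂ ℂ with hsnd_def
  set D : ℂ × ℂ →L[ℂ] ℂ × ℂ := fstL.prod (A • fstL + B • sndL) with hD_def
  have hDeriv : HasFDerivAt Φ D (0, c) := by
    apply HasFDerivAt.prodMk (hasFDerivAt_fst)
    have h1 : HasFDerivAt (fun p : ℂ × ℂ => p.1 ^ n)
        ((↑n * (0:ℂ) ^ (n - 1)) • fstL) (0, c) :=
      (hasDerivAt_pow n (0:ℂ)).comp_hasFDerivAt ((0:ℂ), c) hasFDerivAt_fst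
    have h2 : HasFDerivAt (fun p : ℂ × ℂ => L p.2) (dL • sndL) (0, c) :=
      (hLan.differentiableAt.hasDerivAt).comp_hasFDerivAt (f := Prod.snd) ((0:ℂ), c) hasFDerivAt_snd
    have h3 : HasFDerivAt (fun p : ℂ × ℂ => 1 / p.2 ^ n) (d3 • sndL) (0, c) :=
      hd3.comp_hasFDerivAt (f := Prod.snd) ((0:ℂ), c) hasFDerivAt_snd
    have h4 : HasFDerivAt (fun p : ℂ × ℂ => σ₂ p.1) (deriv σ₂ 0 • fstL) (0, c) :=
      (hσ.differentiableAt.hasDerivAt).comp_hasFDerivAt ((0:ℂ), c) hasFDerivAt_fst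
    have := ((h1.fun_mul h2).fun_add h3).fun_add h4
    convert this using 1
    refine ContinuousLinearMap.ext fun p => ?_
    simp only [ContinuousLinearMap.add_apply, ContinuousLinearMap.smul_apply,
      ContinuousLinearMap.coe_fst', ContinuousLinearMap.coe_snd', hA_def, hB_def, hzp,
      smul_eq_mul]
    ring
  -- the derivative as a continuous linear equivalence
  set Dinv : ℂ × ℂ →L[ℂ] ℂ × ℂ := fstL.prod (B⁻¹ • (sndL - A • fstL)) with hDinv_def
  have hli : Function.LeftInverse Dinv D := by
    rintro ⟨u, v⟩
    refine Prod.ext rfl ?_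
    show B⁻¹ * ((A * u + B * v) - A * u) = v
    rw [add_sub_cancel_left]
    exact inv_mul_cancel_left₀ hBne v
  have hri : Function.RightInverse Dinv D := by
    rintro ⟨u, w⟩
    refine Prod.ext rfl ?_
    show A * u + B * (B⁻¹ * (w - A * u)) = w
    rw [mul_inv_cancel_left₀ hBne, add_sub_cancel]
  set i : (ℂ × ℂ) ≃L[ℂ] (ℂ × ℂ) := ContinuousLinearEquiv.equivOfInverse D Dinv hli hri
    with hi_def
  have hfd : fderiv ℂ Φ (0, c) = (i : (ℂ × ℂ) →L[ℂ] ℂ × ℂ) := hDeriv.fderiv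
  have hstrict : HasStrictFDerivAt Φ (i : (ℂ × ℂ) →L[ℂ] ℂ × ℂ) (0, c) := by
    have := hΦan.hasStrictFDerivAt
    rwa [hfd] at this
  set P : OpenPartialHomeomorph (ℂ × ℂ) (ℂ × ℂ) := hstrict.toOpenPartialHomeomorph Φ with hP_def
  have hPcoe : (P : ℂ × ℂ → ℂ × ℂ) = Φ := hstrict.toOpenPartialHomeomorph_coe
  have hPsrc : (0, c) ∈ P.source := hstrict.mem_toOpenPartialHomeomorph_source
  have hPsymm : AnalyticAt ℂ P.symm ((0 : ℂ), (0 : ℂ)) := by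
    have h0 : Φ (0, c) = ((0:ℂ), (0:ℂ)) := hΦ0
    have := P.analyticAt_symm' (i := i) hPsrc (by rw [hPcoe]; exact hΦan)
      (by rw [hPcoe]; exact hfd)
    rwa [hPcoe, h0] at this
  -- the implicit function
  set h : ℂ → ℂ := fun z => (P.symm (z, 0)).2 with hh_def
  have hzero_map : AnalyticAt ℂ (fun z : ℂ => ((z, 0) : ℂ × ℂ)) 0 :=
    analyticAt_id.prod analyticAt_const
  have hhan : AnalyticAt ℂ h 0 := by
    have hcomp := AnalyticAt.comp (g := P.symm) (f := fun z : ℂ => ((z, 0) : ℂ × ℂ))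
      (x := (0:ℂ)) hPsymm hzero_map
    have := AnalyticAt.comp (g := fun p : ℂ × ℂ => p.2)
      (f := fun z : ℂ => P.symm (z, 0)) (x := (0:ℂ)) analyticAt_snd
      (by simpa [Function.comp_def] using hcomp)
    simpa [Function.comp_def, hh_def] using this
  have hsymm0 : P.symm ((0:ℂ), (0:ℂ)) = ((0:ℂ), c) := by
    have := P.left_inv hPsrc
    rwa [hPcoe, hΦ0] at this
  have hh0 : h 0 = c := by rw [hh_def]; simp only at hsymm0 ⊢; rw [hsymm0]
  -- the functional equation near 0
  have hmain : ∀ᶠ z in nhds (0:ℂ), z ^ n * L (h z) + 1 / (h z) ^ n + σ₂ z = 0 := by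
    have htgt : ∀ᶠ z in nhds (0:ℂ), ((z, (0:ℂ)) : ℂ × ℂ) ∈ P.target := by
      have hopen : IsOpen P.target := P.open_target
      have hmem : ((0:ℂ), (0:ℂ)) ∈ P.target := by
        have := P.map_source hPsrc
        rwa [hPcoe, hΦ0] at this
      have hcont : Continuous (fun z : ℂ => ((z, 0) : ℂ × ℂ)) :=
        continuous_id.prodMk continuous_const
      exact hcont.continuousAt.eventually_mem (hopen.mem_nhds hmem)
    filter_upwards [htgt] with z hz
    have := P.right_inv hz
    rw [hPcoe] at this
    have h1 : (P.symm (z, 0)).1 = z := congrArg Prod.fst this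
    have h2 : (P.symm (z, 0)).1 ^ n * L ((P.symm (z, 0)).2)
        + 1 / ((P.symm (z, 0)).2) ^ n + σ₂ ((P.symm (z, 0)).1) = 0 :=
      congrArg Prod.snd this
    rw [h1] at h2
    exact h2
  -- eventually h z ≠ 0
  have hne : ∀ᶠ z in nhds (0:ℂ), h z ≠ 0 := by
    have : ContinuousAt h 0 := hhan.continuousAt
    exact this.eventually_ne (by rw [hh0]; exact hc)
  refine ⟨h, L, hhan, by rw [hh0]; exact hc, by rw [hh0]; exact hLan,
    by rw [hh0]; exact hLexp, hmain.mono (fun z hz _ => hz), ?_, ?_⟩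
  · -- derivative of z * h z at 0
    have hd : HasDerivAt (fun z => z * h z) (1 * h 0 + 0 * deriv h 0) 0 :=
      (hasDerivAt_id' (x := (0:ℂ))).mul (hhan.differentiableAt.hasDerivAt)
    rw [hd.deriv, hh0]
    simpa using hc
  · filter_upwards [hmain, hne] with z E hne0 hz0
    have hzn : z ^ n ≠ 0 := pow_ne_zero _ hz0
    have hhn : (h z) ^ n ≠ 0 := pow_ne_zero _ hne0
    rw [mul_pow]
    field_simp
    have aux : (h z) ^ n * ((h z)⁻¹) ^ n = 1 := by
      rw [← mul_pow, mul_inv_cancel₀ hne0, one_pow]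
    linear_combination (h z) ^ n * E - aux
end

section
/- Let U_{R'} = {z ∈ ℂ : |z| > R'}. For R' sufficiently large, the map f(z) = z + log z (using the principal branch of log on ℂ ∖ ℝ⁻ and extended via the identification of V_R) is injective on U_{R'} ∖ ℝ⁻. In particular, there exists R' > 0 such that for all z₁, z₂ ∈ ℂ ∖ ℝ⁻ with |z₁|, |z₂| > R', if z₁ + Log z₁ = z₂ + Log z₂ then z₁ = z₂, where Log is the principal branch of logarithm. -/
open Complex

/-- Lipschitz-type estimate for `Real.log` away from `0`. -/
lemma log_sub_log_le_aux {a b : ℝ} (ha : 100 < a) (hb : 100 < b) (hab : b ≤ a) :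
    Real.log a - Real.log b ≤ |a - b| / 100 := by
  have hb0 : 0 < b := by linarith
  have h1 : Real.log a - Real.log b = Real.log (a / b) := by
    rw [Real.log_div (by linarith) (by linarith)]
  have h2 : Real.log (a / b) ≤ a / b - 1 :=
    Real.log_le_sub_one_of_pos (by positivity)
  have h3 : a / b - 1 = (a - b) / b := by field_simp
  have h4 : (a - b) / b ≤ (a - b) / 100 := by
    apply div_le_div_of_nonneg_left (by linarith) (by norm_num) (by linarith)
  have h5 : (a - b) / 100 ≤ |a - b| / 100 := by
    apply div_le_div_of_nonneg_right (le_abs_self _)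
    norm_num
  linarith

lemma abs_log_sub_log_le {a b : ℝ} (ha : 100 < a) (hb : 100 < b) :
    |Real.log a - Real.log b| ≤ |a - b| / 100 := by
  rcases le_total b a with h | h
  · rw [_root_.abs_of_nonneg (by
      have := Real.log_le_log (by linarith : (0:ℝ) < b) h
      linarith)]
    exact log_sub_log_le_aux ha hb h
  · rw [_root_.abs_of_nonpos (by
      have := Real.log_le_log (by linarith : (0:ℝ) < a) h
      linarith), abs_sub_comm, neg_sub]
    exact log_sub_log_le_aux hb ha h

/-- Key mean-value estimate for `Complex.log` on a segment in the closed upper half plane,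
far from the origin. -/
lemma key_upper {z₁ z₂ : ℂ} (h1 : (100:ℝ) < ‖z₁‖) (h2 : (100:ℝ) < ‖z₂‖)
    (hi1 : 0 ≤ z₁.im) (hi2 : 0 ≤ z₂.im)
    (hre1 : ¬(z₁.im = 0 ∧ z₁.re < 0)) (hre2 : ¬(z₂.im = 0 ∧ z₂.re < 0))
    (hd : ‖z₁ - z₂‖ ≤ 7) :
    ‖Complex.log z₂ - Complex.log z₁‖ ≤ (1/93) * ‖z₂ - z₁‖ := by
  have hz1ne : z₁ ≠ 0 := by
    intro h; rw [h] at h1; simp at h1; linarith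
  have hz2ne : z₂ ≠ 0 := by
    intro h; rw [h] at h2; simp at h2; linarith
  have hre1' : z₁.im = 0 → 0 < z₁.re := by
    intro h
    rcases lt_trichotomy z₁.re 0 with hlt | heq | hgt
    · exact absurd ⟨h, hlt⟩ hre1
    · exact (hz1ne (Complex.ext heq h)).elim
    · exact hgt
  have hre2' : z₂.im = 0 → 0 < z₂.re := by
    intro h
    rcases lt_trichotomy z₂.re 0 with hlt | heq | hgt
    · exact absurd ⟨h, hlt⟩ hre2
    · exact (hz2ne (Complex.ext heq h)).elim
    · exact hgt
  -- every point of the segment is far from 0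
  have habs : ∀ x ∈ segment ℝ z₁ z₂, (93:ℝ) ≤ ‖x‖ := by
    rintro x ⟨a, b, ha, hb, hab, rfl⟩
    have hb1 : b ≤ 1 := by linarith
    have hx1 : ‖z₁ - (a • z₁ + b • z₂)‖ ≤ 7 := by
      have heq : z₁ - (a • z₁ + b • z₂) = b • (z₁ - z₂) := by
        have haa : a = 1 - b := by linarith
        subst haa
        apply Complex.ext <;> simp [Complex.smul_re, Complex.smul_im] <;> ring
      rw [heq]
      have : ‖b • (z₁ - z₂)‖ = b * ‖z₁ - z₂‖ := by
        rw [norm_smul, Real.norm_eq_abs, _root_.abs_of_nonneg hb]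
      rw [this]
      calc b * ‖z₁ - z₂‖ ≤ 1 * ‖z₁ - z₂‖ :=
            mul_le_mul_of_nonneg_right hb1 (norm_nonneg _)
        _ ≤ 7 := by rw [one_mul]; exact hd
    have htri : ‖z₁‖ ≤ ‖z₁ - (a • z₁ + b • z₂)‖ +
        ‖a • z₁ + b • z₂‖ := by
      have := norm_add_le (z₁ - (a • z₁ + b • z₂)) (a • z₁ + b • z₂)
      simpa using this
    linarith
  -- every point of the segment is in the slit plane
  have hslit : ∀ x ∈ segment ℝ z₁ z₂, x ∈ Complex.slitPlane := by
    rintro x ⟨a, b, ha, hb, hab, rfl⟩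
    rw [Complex.mem_slitPlane_iff]
    by_cases him : (a • z₁ + b • z₂).im = 0
    · left
      have himx : a * z₁.im + b * z₂.im = 0 := by
        simpa [Complex.add_im, Complex.real_smul, Complex.mul_im] using him
      have h1' : a * z₁.im = 0 := by nlinarith [mul_nonneg ha hi1, mul_nonneg hb hi2]
      have h2' : b * z₂.im = 0 := by nlinarith [mul_nonneg ha hi1, mul_nonneg hb hi2]
      have hrex : (a • z₁ + b • z₂).re = a * z₁.re + b * z₂.re := by
        simp [Complex.add_re, Complex.real_smul, Complex.mul_re]
      rw [hrex]
      rcases mul_eq_zero.1 h1' with ha0 | hi10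
      · -- a = 0, so b = 1 and x = z₂
        have hb1 : b = 1 := by linarith
        subst ha0 hb1
        have : z₂.im = 0 := by simpa using himx
        have := hre2' this
        simpa using this
      · rcases mul_eq_zero.1 h2' with hb0 | hi20
        · have ha1 : a = 1 := by linarith
          subst hb0 ha1
          have : z₁.im = 0 := by simpa using himx
          have := hre1' this
          simpa using this
        · have hp1 := hre1' hi10
          have hp2 := hre2' hi20
          rcases (lt_or_eq_of_le ha) with ha' | ha'
          · nlinarith
          · have hb1 : b = 1 := by linarith
            rw [← ha', hb1]; nlinarith
    · right; exact him
  -- mean value estimate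
  have hderiv : ∀ x ∈ segment ℝ z₁ z₂,
      HasDerivWithinAt Complex.log x⁻¹ (segment ℝ z₁ z₂) x := fun x hx =>
    (Complex.hasDerivAt_log (hslit x hx)).hasDerivWithinAt
  have hbound : ∀ x ∈ segment ℝ z₁ z₂, ‖x⁻¹‖ ≤ (1:ℝ)/93 := by
    intro x hx
    rw [norm_inv]
    have h93 := habs x hx
    rw [div_eq_mul_inv, one_mul]
    exact inv_anti₀ (by norm_num) h93
  exact (convex_segment z₁ z₂).norm_image_sub_le_of_norm_hasDerivWithin_le hderiv hbound
    (left_mem_segment ℝ z₁ z₂) (right_mem_segment ℝ z₁ z₂)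

/-- for `R'` large enough, `z ↦ z + Log z` (principal branch) is injective
on `{|z| > R'} ∖ ℝ⁻`. -/
theorem stmt8 :
    ∃ R' : ℝ, 0 < R' ∧ ∀ z₁ z₂ : ℂ,
      R' < ‖z₁‖ → R' < ‖z₂‖ →
      ¬(z₁.im = 0 ∧ z₁.re < 0) → ¬(z₂.im = 0 ∧ z₂.re < 0) →
      z₁ + Complex.log z₁ = z₂ + Complex.log z₂ → z₁ = z₂ := by
  refine ⟨100, by norm_num, fun z₁ z₂ h1 h2 hre1 hre2 heq => ?_⟩
  have hz1ne : z₁ ≠ 0 := by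
    intro h; rw [h] at h1; simp at h1; linarith
  have hz2ne : z₂ ≠ 0 := by
    intro h; rw [h] at h2; simp at h2; linarith
  have hkey : z₁ - z₂ = Complex.log z₂ - Complex.log z₁ := by
    have := heq
    ring_nf at this ⊢
    linear_combination this
  -- step 1 : |z₁ - z₂| ≤ 7
  have hd : ‖z₁ - z₂‖ ≤ 7 := by
    have hre : (z₁ - z₂).re = Real.log ‖z₂‖ - Real.log ‖z₁‖ := by
      rw [hkey, Complex.sub_re, Complex.log_re, Complex.log_re]
    have him : (z₁ - z₂).im = Complex.arg z₂ - Complex.arg z₁ := by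
      rw [hkey, Complex.sub_im, Complex.log_im, Complex.log_im]
    have hbr : |(z₁ - z₂).re| ≤ ‖z₁ - z₂‖ / 100 := by
      rw [hre]
      calc |Real.log ‖z₂‖ - Real.log ‖z₁‖|
          ≤ |‖z₂‖ - ‖z₁‖| / 100 := abs_log_sub_log_le h2 h1
        _ ≤ ‖z₂ - z₁‖ / 100 := by
            apply div_le_div_of_nonneg_right _ (by norm_num)
            exact abs_norm_sub_norm_le z₂ z₁
        _ = ‖z₁ - z₂‖ / 100 := by rw [norm_sub_rev]
    have hbi : |(z₁ - z₂).im| ≤ 2 * Real.pi := by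
      rw [him]
      have := Complex.abs_arg_le_pi z₁
      have := Complex.abs_arg_le_pi z₂
      rw [abs_sub_comm]
      calc |Complex.arg z₁ - Complex.arg z₂| ≤ |Complex.arg z₁| + |Complex.arg z₂| :=
            abs_sub _ _
        _ ≤ 2 * Real.pi := by linarith
    have htot := Complex.norm_le_abs_re_add_abs_im (z₁ - z₂)
    have hpi : Real.pi ≤ 3.15 := by
      have := Real.pi_lt_d2
      linarith
    nlinarith [norm_nonneg (z₁ - z₂)]
  -- step 2 : sign analysis on imaginary parts
  have hfinal : ‖Complex.log z₂ - Complex.log z₁‖ ≤ (1/93) * ‖z₂ - z₁‖ := by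
    rcases le_or_gt 0 z₁.im with hi1 | hi1
    · rcases le_or_gt 0 z₂.im with hi2 | hi2
      · exact key_upper h1 h2 hi1 hi2 hre1 hre2 hd
      · -- z₁ upper, z₂ strictly lower : contradiction via arg
        exfalso
        have him : (z₁ - z₂).im = Complex.arg z₂ - Complex.arg z₁ := by
          rw [hkey, Complex.sub_im, Complex.log_im, Complex.log_im]
        have h1' : 0 ≤ Complex.arg z₁ := Complex.arg_nonneg_iff.2 hi1
        have h2' : Complex.arg z₂ < 0 := Complex.arg_neg_iff.2 hi2
        have : 0 < (z₁ - z₂).im := by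
          rw [Complex.sub_im]; linarith
        linarith [him ▸ this]
    · rcases le_or_gt 0 z₂.im with hi2 | hi2
      · exfalso
        have him : (z₁ - z₂).im = Complex.arg z₂ - Complex.arg z₁ := by
          rw [hkey, Complex.sub_im, Complex.log_im, Complex.log_im]
        have h1' : Complex.arg z₁ < 0 := Complex.arg_neg_iff.2 hi1
        have h2' : 0 ≤ Complex.arg z₂ := Complex.arg_nonneg_iff.2 hi2
        have : (z₁ - z₂).im < 0 := by
          rw [Complex.sub_im]; linarith
        linarith [him ▸ this]
      · -- both strictly lower : use conjugates
        have harg1 : z₁.arg ≠ Real.pi := fun h =>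
          hre1 ⟨(Complex.arg_eq_pi_iff.1 h).2, (Complex.arg_eq_pi_iff.1 h).1⟩
        have harg2 : z₂.arg ≠ Real.pi := fun h =>
          hre2 ⟨(Complex.arg_eq_pi_iff.1 h).2, (Complex.arg_eq_pi_iff.1 h).1⟩
        have hc := key_upper (z₁ := (starRingEnd ℂ) z₁) (z₂ := (starRingEnd ℂ) z₂)
          (by rwa [Complex.norm_conj]) (by rwa [Complex.norm_conj])
          (by simp; linarith) (by simp; linarith)
          (by simp; intro h; linarith) (by simp; intro h; linarith)
          (by rw [← map_sub, Complex.norm_conj]; exact hd)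
        rw [Complex.log_conj z₂ harg2, Complex.log_conj z₁ harg1, ← map_sub, ← map_sub,
          Complex.norm_conj, Complex.norm_conj] at hc
        exact hc
  -- step 3 : conclude
  have hnorm : ‖z₁ - z₂‖ = ‖Complex.log z₂ - Complex.log z₁‖ := by rw [hkey]
  have h93 : ‖z₂ - z₁‖ = ‖z₁ - z₂‖ := by rw [← neg_sub z₁ z₂, norm_neg]
  rw [h93] at hfinal
  rw [← hnorm] at hfinal
  have : ‖z₁ - z₂‖ = 0 := by linarith [norm_nonneg (z₁ - z₂)]
  exact sub_eq_zero.1 (norm_eq_zero.1 this)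
end
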